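/- Let B be a Banach lattice, N = {1,…,n} agents with strongly monotone, continuous, quasi-concave utilities uᵢ(·, z) : B₊ → ℝ for each z in a set 𝒴 of public projects. If (x₁,…,xₙ, y) is a cost share equilibrium allocation with cost distribution function ρ and price system π, then (x₁,…,xₙ, y) belongs to the Aubin σ-core: there is no Aubin coalition γ ∈ [0,1]ⁿ∖{0}, public project z, and private goods assignment (ξ₁,…,ξₙ) with ∑ᵢ γᵢξᵢ + (∑ᵢ γᵢρ(i,z))c(z) = ∑ᵢ γᵢeᵢ and uᵢ(ξᵢ, z) > uᵢ(xᵢ, y) for all i with γᵢ > 0. -/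

import Mathlib

/-- A cost share equilibrium allocation belongs to the Aubin σ-core:
no Aubin coalition `γ ∈ [0,1]ⁿ \ {0}` can block it via some project `z` and private
goods assignment `(ξ₁,…,ξₙ)` with
`∑ γᵢξᵢ + (∑ γᵢρ(i,z))·c(z) = ∑ γᵢeᵢ` and `uᵢ(ξᵢ,z) > uᵢ(xᵢ,y)` on the support. -/
theorem stmt_10 {B : Type*} [NormedAddCommGroup B] [Lattice B] [HasSolidNorm B]
    [IsOrderedAddMonoid B] [NormedSpace ℝ B]
    {Y : Type*} (n : ℕ)
    (u : Fin n → B → Y → ℝ) (e : Fin n → B) (he : ∀ i, 0 ≤ e i)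
    (c : Y → B) (hc : ∀ z, 0 ≤ c z)
    (hcont : ∀ i z, Continuous (fun ξ => u i ξ z))
    (hmono : ∀ i z, ∀ ξ ζ : B, 0 ≤ ζ → ζ ≤ ξ → ζ ≠ ξ → u i ζ z < u i ξ z)
    (hqc : ∀ i z, ∀ ξ ζ : B, ∀ l : ℝ, l ∈ Set.Icc (0:ℝ) 1 →
      min (u i ξ z) (u i ζ z) ≤ u i (l • ξ + (1 - l) • ζ) z)
    (π : Y → B →L[ℝ] ℝ) (ρ : Fin n → Y → ℝ)
    (hρ : ∀ i z, 0 ≤ ρ i z) (hρsum : ∀ z, ∑ i, ρ i z = 1)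
    (x : Fin n → B) (hx : ∀ i, 0 ≤ x i) (y : Y)
    (hfeas : ∑ i, x i + c y = ∑ i, e i)
    -- cost share equilibrium with price system π and cost distribution ρ
    (hbudget : ∀ i, π y (x i) + ρ i y * π y (c y) ≤ π y (e i))
    (hopt : ∀ i, ∀ (ζ : B) (w : Y), 0 ≤ ζ →
      π w ζ + ρ i w * π w (c w) ≤ π w (e i) → u i ζ w ≤ u i (x i) y) :
    ¬ ∃ (γ : Fin n → ℝ) (z : Y) (ξ : Fin n → B),
      (∀ i, γ i ∈ Set.Icc (0:ℝ) 1) ∧ (∃ i, 0 < γ i) ∧ (∀ i, 0 ≤ ξ i) ∧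
      (∑ i, γ i • ξ i + (∑ i, γ i * ρ i z) • c z = ∑ i, γ i • e i) ∧
      (∀ i, 0 < γ i → u i (x i) y < u i (ξ i) z) := by
  rintro ⟨γ, z, ξ, hγ, ⟨i₀, hi₀⟩, hξ, hsum, hpref⟩
  -- each agent in the support violates the budget at z
  have hviol : ∀ i, 0 < γ i → π z (e i) < π z (ξ i) + ρ i z * π z (c z) := by
    intro i hi
    by_contra h
    push_neg at h
    exact absurd (hopt i (ξ i) z (hξ i) h) (not_le.mpr (hpref i hi))
  -- weighted sum of budget violations
  have hlt : ∑ i, γ i * π z (e i) < ∑ i, γ i * (π z (ξ i) + ρ i z * π z (c z)) := by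
    apply Finset.sum_lt_sum
    · intro i _
      rcases lt_or_eq_of_le (hγ i).1 with h | h
      · exact mul_le_mul_of_nonneg_left (le_of_lt (hviol i h)) (le_of_lt h)
      · simp [← h]
    · exact ⟨i₀, Finset.mem_univ i₀, mul_lt_mul_of_pos_left (hviol i₀ hi₀) hi₀⟩
  -- but applying π z to the feasibility equation gives equality
  have heq := congrArg (π z) hsum
  simp only [map_add, map_sum, map_smul, smul_eq_mul] at heq
  have hcalc : ∑ i, γ i * (π z (ξ i) + ρ i z * π z (c z))
      = ∑ i, γ i * π z (ξ i) + (∑ i, γ i * ρ i z) * π z (c z) := by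
    rw [Finset.sum_mul, ← Finset.sum_add_distrib]
    exact Finset.sum_congr rfl fun i _ => by ring
  rw [hcalc, heq] at hlt
  exact lt_irrefl _ hlt
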